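/- arXiv:1511.03570 — 2 statements merged into one kernel-verified Lean document; each statement's English description precedes it below -/
import Mathlib

section
/- Let X = X₁ × ⋯ × X_n with |X_i| ≥ 2, let 1 ≤ k ≤ n, and let A ∈ ℝ^{a×X} have rows spanning V_k(X). Let Y = Y₁ × ⋯ × Y_m with |Y_j| ≥ 2, let Λ' be an inclusion-closed family of subsets of [m], and let B ∈ ℝ^{b×Y} have rows spanning V_{Λ'}(Y). If X can be partitioned into rank(B) pairwise disjoint radius-k Hamming balls, then max_{θ∈ℝ^{ab}} rank(𝒜_θ) = |X|. -/
open scoped Classical BigOperators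

/-- `V_Λ(X)`: the span of all functions on `X = ∏ i, X_i` that depend only on the
coordinates `x_λ` for some `λ ∈ Λ`. -/
noncomputable def VLam (n : ℕ) (q : Fin n → ℕ) (Λ : Finset (Finset (Fin n))) :
    Submodule ℝ ((∀ i, Fin (q i)) → ℝ) :=
  Submodule.span ℝ
    {f : (∀ i, Fin (q i)) → ℝ | ∃ s ∈ Λ,
      ∀ x x' : ∀ i, Fin (q i), (∀ i ∈ s, x i = x' i) → f x = f x'}

/-- `V_k(X)`: the span of all functions on `X = ∏ i, X_i` depending on at most `k`
coordinates. -/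
noncomputable def Vk (n : ℕ) (q : Fin n → ℕ) (k : ℕ) :
    Submodule ℝ ((∀ i, Fin (q i)) → ℝ) :=
  Submodule.span ℝ
    {f : (∀ i, Fin (q i)) → ℝ | ∃ s : Finset (Fin n), s.card ≤ k ∧
      ∀ x x' : ∀ i, Fin (q i), (∀ i ∈ s, x i = x' i) → f x = f x'}

/-- The argmax (inference) set `h_θ(x) = argmax_{y} ⟨θ, A_x ⊗ B_y⟩`. -/
noncomputable def infSet {a bn : ℕ} {X Y : Type*} [Fintype Y]
    (A : Matrix (Fin a) X ℝ) (B : Matrix (Fin bn) Y ℝ)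
    (θ : Fin a × Fin bn → ℝ) (x : X) : Finset Y :=
  Finset.univ.filter (fun y : Y => ∀ y' : Y,
    ∑ s : Fin a × Fin bn, θ s * (A s.1 x * B s.2 y') ≤
      ∑ s : Fin a × Fin bn, θ s * (A s.1 x * B s.2 y))

/-- The tropical morphism matrix `𝒜_θ` with columns
`A_x ⊗ ((1/|h_θ(x)|) ∑_{y ∈ h_θ(x)} B_y)`. -/
noncomputable def tropMat {a bn : ℕ} {X Y : Type*} [Fintype Y]
    (A : Matrix (Fin a) X ℝ) (B : Matrix (Fin bn) Y ℝ)
    (θ : Fin a × Fin bn → ℝ) : Matrix (Fin a × Fin bn) X ℝ :=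
  fun p x =>
    A p.1 x * (((infSet A B θ x).card : ℝ)⁻¹ * ∑ y ∈ infSet A B θ x, B p.2 y)

namespace Trop16

/-- a product of 0/1 indicators -/
lemma prod_ind_eq_ite {ι : Type*} (s : Finset ι) (P : ι → Prop) [DecidablePred P] :
    (∏ i ∈ s, if P i then (1:ℝ) else 0) = if (∀ i ∈ s, P i) then 1 else 0 := by
  by_cases h : ∀ i ∈ s, P i
  · rw [if_pos h, Finset.prod_eq_one]
    intro i hi; rw [if_pos (h i hi)]
  · rw [if_neg h]
    push_neg at h
    obtain ⟨i, hi, hne⟩ := h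
    exact Finset.prod_eq_zero hi (if_neg hne)

lemma prod_ind_ne_zero {ι : Type*} {s : Finset ι} {P : ι → Prop} [DecidablePred P]
    (h : (∏ i ∈ s, if P i then (1:ℝ) else 0) ≠ 0) : ∀ i ∈ s, P i := by
  rw [prod_ind_eq_ite] at h
  by_cases hP : ∀ i ∈ s, P i
  · exact hP
  · rw [if_neg hP] at h; exact absurd rfl h

variable {m : ℕ} {r : Fin m → ℕ}

/-- support of a pattern relative to base point `y0` -/
noncomputable def psupp (y0 v : ∀ j, Fin (r j)) : Finset (Fin m) :=
  Finset.univ.filter (fun i => v i ≠ y0 i)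

/-- indicator of agreeing with pattern `v` on its support -/
noncomputable def chi (y0 v : ∀ j, Fin (r j)) : (∀ j, Fin (r j)) → ℝ :=
  fun y => ∏ i ∈ psupp y0 v, if y i = v i then 1 else 0

lemma mem_psupp {y0 v : ∀ j, Fin (r j)} {i : Fin m} :
    i ∈ psupp y0 v ↔ v i ≠ y0 i := by simp [psupp]

lemma psupp_self (y0 : ∀ j, Fin (r j)) : psupp y0 y0 = ∅ := by
  ext i; simp [mem_psupp]

lemma chi_apply (y0 v y : ∀ j, Fin (r j)) :
    chi y0 v y = if (∀ i ∈ psupp y0 v, y i = v i) then 1 else 0 := by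
  by_cases h : ∀ i ∈ psupp y0 v, y i = v i
  · rw [if_pos h, chi, Finset.prod_eq_one]
    intro i hi; rw [if_pos (h i hi)]
  · rw [if_neg h]
    push_neg at h
    obtain ⟨i, hi, hne⟩ := h
    exact Finset.prod_eq_zero hi (if_neg hne)

lemma chi_self (y0 v : ∀ j, Fin (r j)) : chi y0 v v = 1 := by
  rw [chi_apply, if_pos]; intro i _; rfl

lemma chi_eq_one_iff {y0 v y : ∀ j, Fin (r j)} :
    chi y0 v y = 1 ↔ ∀ i ∈ psupp y0 v, y i = v i := by
  rw [chi_apply]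
  by_cases h : ∀ i ∈ psupp y0 v, y i = v i
  · rw [if_pos h]; exact iff_of_true rfl h
  · rw [if_neg h]; exact iff_of_false zero_ne_one h

lemma chi_eq_zero_iff {y0 v y : ∀ j, Fin (r j)} :
    chi y0 v y = 0 ↔ ¬ (∀ i ∈ psupp y0 v, y i = v i) := by
  rw [chi_apply]
  by_cases h : ∀ i ∈ psupp y0 v, y i = v i
  · rw [if_pos h]; exact iff_of_false one_ne_zero (not_not_intro h)
  · rw [if_neg h]; exact iff_of_true rfl h

lemma chi_zero_or_one (y0 v y : ∀ j, Fin (r j)) :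
    chi y0 v y = 0 ∨ chi y0 v y = 1 := by
  rw [chi_apply]
  by_cases h : ∀ i ∈ psupp y0 v, y i = v i
  · rw [if_pos h]; exact Or.inr rfl
  · rw [if_neg h]; exact Or.inl rfl

/-- a pattern is determined by its support and its values there -/
lemma pattern_ext {y0 v w : ∀ j, Fin (r j)} (hs : psupp y0 v = psupp y0 w)
    (h : ∀ i ∈ psupp y0 v, v i = w i) : v = w := by
  funext i
  by_cases hi : i ∈ psupp y0 v
  · exact h i hi
  · have hv : v i = y0 i := by
      by_contra hc; exact hi (mem_psupp.mpr hc)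
    have hw : w i = y0 i := by
      by_contra hc; exact hi (hs ▸ mem_psupp.mpr hc)
    rw [hv, hw]

/-- the full family of pattern indicators is linearly independent -/
lemma chi_linearIndependent (y0 : ∀ j, Fin (r j)) :
    LinearIndependent ℝ (chi y0) := by
  rw [Fintype.linearIndependent_iff]
  intro g hg
  by_contra hc
  push_neg at hc
  obtain ⟨v, hv⟩ := hc
  have hS : (Finset.univ.filter (fun v => g v ≠ 0)).Nonempty :=
    ⟨v, by simp [hv]⟩
  obtain ⟨v0, hv0, hmin⟩ := Finset.exists_max_image
    (Finset.univ.filter (fun v => g v ≠ 0)) (fun v => (m - (psupp y0 v).card : ℕ)) hS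
  have hv0ne : g v0 ≠ 0 := (Finset.mem_filter.mp hv0).2
  have heval : ∑ v : (∀ j, Fin (r j)), g v * chi y0 v v0 = 0 := by
    have := congrFun hg v0
    simpa using this
  have hzero : ∀ v, v ≠ v0 → g v * chi y0 v v0 = 0 := by
    intro v hne
    by_cases hgv : g v = 0
    · rw [hgv, zero_mul]
    · by_cases hchi : ∀ i ∈ psupp y0 v, v0 i = v i
      · have hsub : psupp y0 v ⊆ psupp y0 v0 := by
          intro i hi
          have := hchi i hi
          exact mem_psupp.mpr (this ▸ mem_psupp.mp hi)
        have hcard : (psupp y0 v0).card ≤ (psupp y0 v).card := by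
          have h1 := hmin v (Finset.mem_filter.mpr ⟨Finset.mem_univ _, hgv⟩)
          have h2 : (psupp y0 v).card ≤ m := by
            simpa using Finset.card_le_card (Finset.subset_univ (psupp y0 v))
          have h3 : (psupp y0 v0).card ≤ m := by
            simpa using Finset.card_le_card (Finset.subset_univ (psupp y0 v0))
          omega
        have heq : psupp y0 v = psupp y0 v0 :=
          Finset.eq_of_subset_of_card_le hsub hcard
        have : v = v0 := pattern_ext heq (fun i hi => (hchi i hi).symm)
        exact absurd this hne
      · rw [chi_eq_zero_iff.mpr hchi, mul_zero]
  have hsum : ∑ v : (∀ j, Fin (r j)), g v * chi y0 v v0 = g v0 := by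
    rw [Finset.sum_eq_single v0]
    · rw [chi_self, mul_one]
    · intro b _ hb; exact hzero b hb
    · intro h; exact absurd (Finset.mem_univ v0) h
  rw [heval] at hsum
  exact hv0ne hsum.symm

lemma psupp_update {y0 w : ∀ j, Fin (r j)} {i : Fin m} {v : Fin (r i)}
    (hv : v ≠ y0 i) (hi : i ∉ psupp y0 w) :
    psupp y0 (Function.update w i v) = insert i (psupp y0 w) := by
  ext j
  by_cases hj : j = i
  · subst hj
    simp [mem_psupp, Function.update_self, hv]
  · simp [mem_psupp, Function.update_of_ne hj, Finset.mem_insert, hj]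

lemma chi_update_mul {y0 w : ∀ j, Fin (r j)} {i : Fin m} {v : Fin (r i)}
    (hv : v ≠ y0 i) (hi : i ∉ psupp y0 w) :
    (fun y => (if y i = v then (1:ℝ) else 0) * chi y0 w y)
      = chi y0 (Function.update w i v) := by
  funext y
  rw [chi, chi, psupp_update hv hi, Finset.prod_insert hi]
  congr 1
  · rw [Function.update_self]
  · apply Finset.prod_congr rfl
    intro j hj
    have : j ≠ i := by rintro rfl; exact hi hj
    rw [Function.update_of_ne this]

lemma mul_ind_mem_span {y0 : ∀ j, Fin (r j)} {t : Finset (Fin m)} {i : Fin m}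
    {v : Fin (r i)} (hv : v ≠ y0 i) (hi : i ∉ t) {g : (∀ j, Fin (r j)) → ℝ}
    (hg : g ∈ Submodule.span ℝ (chi y0 '' {w | psupp y0 w ⊆ t})) :
    (fun y => (if y i = v then (1:ℝ) else 0) * g y)
      ∈ Submodule.span ℝ (chi y0 '' {w | psupp y0 w ⊆ insert i t}) := by
  set ind : (∀ j, Fin (r j)) → ℝ := fun y => if y i = v then (1:ℝ) else 0 with hind
  have key : (fun y => ind y * g y) = LinearMap.mulLeft ℝ ind g := rfl
  rw [key]
  have hmap := Submodule.apply_mem_span_image_of_mem_span (LinearMap.mulLeft ℝ ind) hg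
  refine Submodule.span_mono ?_ hmap
  rintro _ ⟨_, ⟨w, hw, rfl⟩, rfl⟩
  have hiw : i ∉ psupp y0 w := fun h => hi (hw h)
  refine ⟨Function.update w i v, ?_, ?_⟩
  · show psupp y0 (Function.update w i v) ⊆ insert i t
    rw [psupp_update hv hiw]
    exact Finset.insert_subset_insert i hw
  · rw [← chi_update_mul hv hiw]
    rfl

/-- any function depending only on coordinates in `s` lies in the span of the
pattern indicators with support inside `s` -/
lemma depends_mem_span (y0 : ∀ j, Fin (r j)) (s : Finset (Fin m)) :
    ∀ f : (∀ j, Fin (r j)) → ℝ,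
      (∀ y y' : ∀ j, Fin (r j), (∀ i ∈ s, y i = y' i) → f y = f y') →
      f ∈ Submodule.span ℝ (chi y0 '' {w | psupp y0 w ⊆ s}) := by
  induction s using Finset.induction_on with
  | empty =>
    intro f hf
    have hconst : f = (f y0) • chi y0 y0 := by
      funext y
      have h1 : f y = f y0 := hf y y0 (by simp)
      have h2 : chi y0 y0 y = 1 := by
        rw [chi, psupp_self, Finset.prod_empty]
      simp [h1, h2]
    rw [hconst]
    refine Submodule.smul_mem _ _ (Submodule.subset_span ⟨y0, ?_, rfl⟩)
    show psupp y0 y0 ⊆ ∅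
    rw [psupp_self]
  | @insert i t hit IH =>
    intro f hf
    have hdec : f = (fun y => f (Function.update y i (y0 i)))
        + ∑ v ∈ Finset.univ.erase (y0 i), (fun y =>
            (if y i = v then (1:ℝ) else 0) *
              (f (Function.update y i v) - f (Function.update y i (y0 i)))) := by
      funext y
      simp only [Pi.add_apply, Finset.sum_apply]
      by_cases hy : y i = y0 i
      · have hz : ∀ v ∈ Finset.univ.erase (y0 i),
            (if y i = v then (1:ℝ) else 0) *
              (f (Function.update y i v) - f (Function.update y i (y0 i))) = 0 := by
          intro v hv
          have : y i ≠ v := by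
            rw [hy]; exact fun h => (Finset.mem_erase.mp hv).1 h.symm
          rw [if_neg this, zero_mul]
        rw [Finset.sum_eq_zero hz, add_zero, ← hy, Function.update_eq_self i y]
      · rw [Finset.sum_eq_single (y i)]
        · rw [if_pos rfl, one_mul, Function.update_eq_self i y]; ring
        · intro v _ hvne
          rw [if_neg (fun h => hvne h.symm), zero_mul]
        · intro hnot
          exact absurd (Finset.mem_erase.mpr ⟨hy, Finset.mem_univ _⟩) hnot
    rw [hdec]
    have hupd : ∀ (v : Fin (r i)), (∀ y y' : ∀ j, Fin (r j), (∀ i' ∈ t, y i' = y' i') →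
        f (Function.update y i v) = f (Function.update y' i v)) := by
      intro v y y' hagree
      apply hf
      intro j hj
      by_cases hji : j = i
      · subst hji; simp [Function.update_self]
      · rw [Function.update_of_ne hji, Function.update_of_ne hji]
        exact hagree j (Finset.mem_of_mem_insert_of_ne hj hji)
    apply Submodule.add_mem
    · have h1 : (fun y => f (Function.update y i (y0 i)))
          ∈ Submodule.span ℝ (chi y0 '' {w | psupp y0 w ⊆ t}) := IH _ (hupd (y0 i))
      refine Submodule.span_mono ?_ h1
      apply Set.image_mono
      intro w hw
      exact hw.trans (Finset.subset_insert i t)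
    · apply Submodule.sum_mem
      intro v hv
      have hvne : v ≠ y0 i := (Finset.mem_erase.mp hv).1
      apply mul_ind_mem_span hvne hit
      exact Submodule.sub_mem _ (IH _ (hupd v)) (IH _ (hupd (y0 i)))

lemma chi_mem_VLam (y0 u : ∀ j, Fin (r j)) (Λ' : Finset (Finset (Fin m)))
    (hu : psupp y0 u ∈ Λ') : chi y0 u ∈ VLam m r Λ' := by
  apply Submodule.subset_span
  refine ⟨psupp y0 u, hu, ?_⟩
  intro y y' hagree
  rw [chi_apply, chi_apply]
  have hiff : (∀ i ∈ psupp y0 u, y i = u i) ↔ (∀ i ∈ psupp y0 u, y' i = u i) := by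
    constructor
    · intro h i hi; rw [← hagree i hi]; exact h i hi
    · intro h i hi; rw [hagree i hi]; exact h i hi
  by_cases h : ∀ i ∈ psupp y0 u, y i = u i
  · rw [if_pos h, if_pos (hiff.mp h)]
  · rw [if_neg h, if_neg (fun h' => h (hiff.mpr h'))]

lemma VLam_eq_span (y0 : ∀ j, Fin (r j)) (Λ' : Finset (Finset (Fin m)))
    (hΛ' : ∀ s ∈ Λ', ∀ t ⊆ s, t ∈ Λ') :
    VLam m r Λ' = Submodule.span ℝ (Set.range
      (fun u : {v : (∀ j, Fin (r j)) // psupp y0 v ∈ Λ'} => chi y0 u.val)) := by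
  apply le_antisymm
  · rw [VLam, Submodule.span_le]
    rintro f ⟨s, hs, hdep⟩
    have h1 := depends_mem_span y0 s f hdep
    refine Submodule.span_mono ?_ h1
    rintro _ ⟨w, hw, rfl⟩
    exact ⟨⟨w, hΛ' s hs _ hw⟩, rfl⟩
  · rw [Submodule.span_le]
    rintro _ ⟨u, rfl⟩
    exact chi_mem_VLam y0 u.val Λ' u.2

lemma rank_eq_card (y0 : ∀ j, Fin (r j)) (Λ' : Finset (Finset (Fin m)))
    (hΛ' : ∀ s ∈ Λ', ∀ t ⊆ s, t ∈ Λ')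
    (bn : ℕ) (B : Matrix (Fin bn) (∀ j, Fin (r j)) ℝ)
    (hB : Submodule.span ℝ (Set.range B) = VLam m r Λ') :
    B.rank = Fintype.card {v : (∀ j, Fin (r j)) // psupp y0 v ∈ Λ'} := by
  have h1 : B.rank = B.transpose.rank := (Matrix.rank_transpose B).symm
  rw [h1, Matrix.rank_eq_finrank_span_cols]
  change Module.finrank ℝ ↥(Submodule.span ℝ (Set.range B)) = _
  rw [hB,
    VLam_eq_span y0 Λ' hΛ']
  exact finrank_span_eq_card
    ((chi_linearIndependent y0).comp Subtype.val Subtype.val_injective)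

end Trop16

set_option maxHeartbeats 2000000 in
open Trop16 in
/-- general Kronecker product of hierarchical models, covering case.
Visible `k`-interaction model, hidden hierarchical model with interactions `Λ'`: if `X`
can be partitioned into `rank B` pairwise disjoint radius-`k` Hamming balls, then
`max_θ rank 𝒜_θ = |X|`. -/
theorem tropical_general_kronecker_covering
    (n : ℕ) (q : Fin n → ℕ) (hq : ∀ i, 2 ≤ q i)
    (k : ℕ) (hk1 : 1 ≤ k) (hkn : k ≤ n)
    (a : ℕ) (A : Matrix (Fin a) (∀ i, Fin (q i)) ℝ)
    (hA : Submodule.span ℝ (Set.range A) = Vk n q k)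
    (m : ℕ) (r : Fin m → ℕ) (hr : ∀ j, 2 ≤ r j)
    (Λ' : Finset (Finset (Fin m))) (hempty : ∅ ∈ Λ')
    (hΛ' : ∀ s ∈ Λ', ∀ t ⊆ s, t ∈ Λ')
    (bn : ℕ) (B : Matrix (Fin bn) (∀ j, Fin (r j)) ℝ)
    (hB : Submodule.span ℝ (Set.range B) = VLam m r Λ')
    (c : Fin B.rank → ∀ i, Fin (q i))
    (hdisj : ∀ j j', j ≠ j' →
      ∀ x, ¬(hammingDist x (c j) ≤ k ∧ hammingDist x (c j') ≤ k))
    (hcov : ∀ x : ∀ i, Fin (q i), ∃ j : Fin B.rank, hammingDist x (c j) ≤ k) :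
    IsGreatest {s : ℕ | ∃ θ : Fin a × Fin bn → ℝ, s = (tropMat A B θ).rank}
      (Fintype.card (∀ i, Fin (q i))) := by
  classical
  -- base point of Y
  set y0 : ∀ j, Fin (r j) := fun j => ⟨0, lt_of_lt_of_le Nat.zero_lt_two (hr j)⟩ with hy0
  -- the index bijection
  have hcard : Fintype.card (Fin B.rank)
      = Fintype.card {v : (∀ j, Fin (r j)) // psupp y0 v ∈ Λ'} := by
    rw [Fintype.card_fin, rank_eq_card y0 Λ' hΛ' bn B hB]
  set e := Fintype.equivOfCardEq hcard with he
  -- inference region (ball) of each x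
  have hJex : ∀ x : ∀ i, Fin (q i), ∃ j : Fin B.rank, hammingDist x (c j) ≤ k := hcov
  set J : (∀ i, Fin (q i)) → Fin B.rank := fun x => Classical.choose (hJex x) with hJdef
  have hJ : ∀ x, hammingDist x (c (J x)) ≤ k := fun x => Classical.choose_spec (hJex x)
  have hJu : ∀ (x : ∀ i, Fin (q i)) (j' : Fin B.rank),
      hammingDist x (c j') ≤ k → j' = J x := by
    intro x j' hj'
    by_contra hne
    exact hdisj j' (J x) hne x ⟨hj', hJ x⟩
  -- the sigma functions
  set σf : Fin B.rank → (∀ i, Fin (q i)) → ℝ :=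
    fun jj x => (k : ℝ) + 1/2 - (hammingDist x (c jj) : ℝ) with hσf
  have hham : ∀ (x y : ∀ i, Fin (q i)),
      (hammingDist x y : ℝ) = (n : ℝ) - ∑ i, (if x i = y i then (1:ℝ) else 0) := by
    intro x y
    rw [Finset.sum_boole]
    have h1 : (Finset.univ.filter (fun i => x i = y i)).card
        + (Finset.univ.filter (fun i => ¬ (x i = y i))).card = n := by
      rw [Finset.card_filter_add_card_filter_not, Finset.card_univ, Fintype.card_fin]
    have h2 : hammingDist x y = (Finset.univ.filter (fun i => ¬ (x i = y i))).card := by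
      simp [hammingDist, Finset.filter_congr_decidable]
    rw [h2]
    have := h1
    push_cast
    have h3 : ((Finset.univ.filter (fun i => x i = y i)).card : ℝ)
        + ((Finset.univ.filter (fun i => ¬ (x i = y i))).card : ℝ) = (n : ℝ) := by
      exact_mod_cast h1
    linarith
  have hσVk : ∀ jj, σf jj ∈ Vk n q k := by
    intro jj
    have hdecomp : σf jj = (fun _ => (k : ℝ) + 1/2 - n)
        + ∑ i : Fin n, (fun x => if x i = c jj i then (1:ℝ) else 0) := by
      funext x
      simp only [Pi.add_apply, Finset.sum_apply, hσf]
      rw [hham x (c jj)]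
      ring
    rw [hdecomp]
    apply Submodule.add_mem
    · apply Submodule.subset_span
      exact ⟨∅, by simpa using Nat.zero_le k, fun _ _ _ => rfl⟩
    · apply Submodule.sum_mem
      intro i _
      apply Submodule.subset_span
      refine ⟨{i}, by simpa using hk1, ?_⟩
      intro x x' hagree
      have hxi := hagree i (Finset.mem_singleton_self i)
      show (if x i = c jj i then (1:ℝ) else 0) = (if x' i = c jj i then (1:ℝ) else 0)
      rw [hxi]
  -- coefficients representing the σ's through A
  have hσspan : ∀ jj, σf jj ∈ Submodule.span ℝ (Set.range A) := by
    intro jj; rw [hA]; exact hσVk jj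
  have hgex : ∀ jj, ∃ g : Fin a → ℝ, ∑ p, g p • A p = σf jj := by
    intro jj
    exact (Submodule.mem_span_range_iff_exists_fun ℝ).mp (hσspan jj)
  set gco : Fin B.rank → Fin a → ℝ := fun jj => Classical.choose (hgex jj) with hgco
  have hgspec : ∀ jj, ∑ p, gco jj p • A p = σf jj := fun jj => Classical.choose_spec (hgex jj)
  -- coefficients representing the chi's through B
  have hhex : ∀ u : {v : (∀ j, Fin (r j)) // psupp y0 v ∈ Λ'},
      ∃ h : Fin bn → ℝ, ∑ q', h q' • B q' = chi y0 u.val := by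
    intro u
    apply (Submodule.mem_span_range_iff_exists_fun ℝ).mp
    rw [hB]
    exact chi_mem_VLam y0 u.val Λ' u.2
  set hco : {v : (∀ j, Fin (r j)) // psupp y0 v ∈ Λ'} → Fin bn → ℝ :=
    fun u => Classical.choose (hhex u) with hhco
  have hhspec : ∀ u, ∑ q', hco u q' • B q' = chi y0 u.val :=
    fun u => Classical.choose_spec (hhex u)
  -- dual functions on the X side
  set Sx : (∀ i, Fin (q i)) → Finset (Fin n) :=
    fun x' => Finset.univ.filter (fun i => x' i ≠ c (J x') i) with hSx
  have hSxcard : ∀ x', (Sx x').card = hammingDist x' (c (J x')) := by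
    intro x'
    simp [hSx, hammingDist, Finset.filter_congr_decidable]
  set fdual : (∀ i, Fin (q i)) → (∀ i, Fin (q i)) → ℝ :=
    fun x' z => ∏ i ∈ Sx x', if z i = x' i then 1 else 0 with hfdual
  have hfVk : ∀ x', fdual x' ∈ Vk n q k := by
    intro x'
    apply Submodule.subset_span
    refine ⟨Sx x', by rw [hSxcard]; exact hJ x', ?_⟩
    intro z z' hagree
    apply Finset.prod_congr rfl
    intro i hi
    rw [hagree i hi]
  have hfspan : ∀ x', fdual x' ∈ Submodule.span ℝ (Set.range A) := by
    intro x'; rw [hA]; exact hfVk x'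
  have hdex : ∀ x', ∃ g : Fin a → ℝ, ∑ p, g p • A p = fdual x' :=
    fun x' => (Submodule.mem_span_range_iff_exists_fun ℝ).mp (hfspan x')
  set gdual : (∀ i, Fin (q i)) → Fin a → ℝ := fun x' => Classical.choose (hdex x') with hgdual
  have hdspec : ∀ x', ∑ p, gdual x' p • A p = fdual x' :=
    fun x' => Classical.choose_spec (hdex x')
  -- weights
  set Cr : ℝ := 2*((n:ℝ)+1)*2^m + 1 with hCr
  have hCr1 : (1:ℝ) ≤ Cr := by
    have h1 : (0:ℝ) ≤ 2*((n:ℝ)+1)*2^m := by positivity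
    linarith
  set W : Fin B.rank → ℝ := fun jj => Cr ^ ((psupp y0 (e jj).val).card) with hW
  have hW1 : ∀ jj, (1:ℝ) ≤ W jj := fun jj => one_le_pow₀ hCr1
  have hWpos : ∀ jj, (0:ℝ) < W jj := fun jj => lt_of_lt_of_le one_pos (hW1 jj)
  -- the parameter θ
  set θ : Fin a × Fin bn → ℝ :=
    fun pq => ∑ jj, W jj * gco jj pq.1 * hco (e jj) pq.2 with hθ
  -- the objective value
  set val : (∀ i, Fin (q i)) → (∀ j, Fin (r j)) → ℝ :=
    fun x y => ∑ s : Fin a × Fin bn, θ s * (A s.1 x * B s.2 y) with hvaldef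
  have hval : ∀ x y, val x y = ∑ jj, W jj * (σf jj x * chi y0 (e jj).val y) := by
    intro x y
    have h0 : val x y = ∑ p, ∑ q', θ (p, q') * (A p x * B q' y) :=
      Fintype.sum_prod_type (fun s : Fin a × Fin bn => θ s * (A s.1 x * B s.2 y))
    calc val x y = ∑ p, ∑ q', θ (p, q') * (A p x * B q' y) := h0
      _ = ∑ p, ∑ q', ∑ jj, W jj * gco jj p * hco (e jj) q' * (A p x * B q' y) := by
          refine Finset.sum_congr rfl fun p _ => Finset.sum_congr rfl fun q' _ => ?_
          show (∑ jj, W jj * gco jj p * hco (e jj) q') * (A p x * B q' y) = _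
          rw [Finset.sum_mul]
      _ = ∑ p, ∑ jj, ∑ q', W jj * gco jj p * hco (e jj) q' * (A p x * B q' y) := by
          exact Finset.sum_congr rfl fun p _ => Finset.sum_comm
      _ = ∑ jj, ∑ p, ∑ q', W jj * gco jj p * hco (e jj) q' * (A p x * B q' y) := by
          exact Finset.sum_comm
      _ = ∑ jj, W jj * ((∑ p, gco jj p * A p x) * (∑ q', hco (e jj) q' * B q' y)) := by
          refine Finset.sum_congr rfl fun jj _ => ?_
          rw [Finset.sum_mul_sum, Finset.mul_sum]
          refine Finset.sum_congr rfl fun p _ => ?_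
          rw [Finset.mul_sum]
          refine Finset.sum_congr rfl fun q' _ => ?_
          ring
      _ = ∑ jj, W jj * (σf jj x * chi y0 (e jj).val y) := by
          refine Finset.sum_congr rfl fun jj _ => ?_
          have h1 : ∑ p, gco jj p * A p x = σf jj x := by
            have := congrFun (hgspec jj) x
            simpa [Finset.sum_apply] using this
          have h2 : ∑ q', hco (e jj) q' * B q' y = chi y0 (e jj).val y := by
            have := congrFun (hhspec (e jj)) y
            simpa [Finset.sum_apply] using this
          rw [h1, h2]
  -- the target inference sets
  set Tset : (∀ i, Fin (q i)) → Finset (∀ j, Fin (r j)) :=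
    fun x => Finset.univ.filter
      (fun y => ∀ i : Fin m, ({i} : Finset (Fin m)) ∈ Λ' → y i = (e (J x)).val i) with hTset
  -- chi is constant on the target inference set
  have hchiT : ∀ (x : ∀ i, Fin (q i)) (u' : {v : (∀ j, Fin (r j)) // psupp y0 v ∈ Λ'})
      (y : ∀ j, Fin (r j)), (∀ i : Fin m, ({i} : Finset (Fin m)) ∈ Λ' → y i = (e (J x)).val i) →
      chi y0 u'.val y = chi y0 u'.val (e (J x)).val := by
    intro x u' y hy
    rw [chi_apply, chi_apply]
    have hiff : (∀ i ∈ psupp y0 u'.val, y i = u'.val i)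
        ↔ (∀ i ∈ psupp y0 u'.val, (e (J x)).val i = u'.val i) := by
      have hag : ∀ i ∈ psupp y0 u'.val, y i = (e (J x)).val i := by
        intro i hi
        apply hy
        exact hΛ' _ u'.2 {i} (Finset.singleton_subset_iff.mpr hi)
      constructor
      · intro h i hi; rw [← hag i hi]; exact h i hi
      · intro h i hi; rw [hag i hi]; exact h i hi
    by_cases h : ∀ i ∈ psupp y0 u'.val, y i = u'.val i
    · rw [if_pos h, if_pos (hiff.mp h)]
    · rw [if_neg h, if_neg (fun h' => h (hiff.mpr h'))]
  -- basic sigma estimates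
  have hσ1 : ∀ x, (1:ℝ)/2 ≤ σf (J x) x := by
    intro x
    have h1 : (hammingDist x (c (J x)) : ℝ) ≤ (k : ℝ) := by exact_mod_cast hJ x
    rw [hσf]; simp only
    linarith
  have hσ2 : ∀ x jj, jj ≠ J x → σf jj x ≤ -(1/2 : ℝ) := by
    intro x jj hne
    have h1 : ¬ hammingDist x (c jj) ≤ k := fun h => hne (hJu x jj h)
    have h2 : (k : ℝ) + 1 ≤ (hammingDist x (c jj) : ℝ) := by
      have : k + 1 ≤ hammingDist x (c jj) := by omega
      exact_mod_cast this
    rw [hσf]; simp only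
    linarith
  have hσ3 : ∀ x jj, -((n:ℝ)+1) ≤ σf jj x := by
    intro x jj
    have h1 : (hammingDist x (c jj) : ℝ) ≤ (n : ℝ) := by
      have := hammingDist_le_card_fintype (x := x) (y := c jj)
      have h2 : hammingDist x (c jj) ≤ n := by simpa using this
      exact_mod_cast h2
    rw [hσf]; simp only
    have h3 : (0:ℝ) ≤ (k:ℝ) := by positivity
    linarith
  -- identification of the inference sets
  have hTmem : ∀ x y, y ∈ Tset x ↔
      (∀ i : Fin m, ({i} : Finset (Fin m)) ∈ Λ' → y i = (e (J x)).val i) := by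
    intro x y
    simp [hTset]
  have husT : ∀ x, (e (J x)).val ∈ Tset x := by
    intro x
    rw [hTmem]
    intro i _
    rfl
  -- value of val on Mset decomposition
  have hMval : ∀ x y, val x y = ∑ jj ∈ Finset.univ.filter
      (fun jj => chi y0 (e jj).val y = 1), W jj * σf jj x := by
    intro x y
    rw [hval x y, ← Finset.sum_filter_add_sum_filter_not Finset.univ
      (fun jj => chi y0 (e jj).val y = 1)
      (fun jj => W jj * (σf jj x * chi y0 (e jj).val y))]
    have hz : ∑ jj ∈ Finset.univ.filter (fun jj => ¬ chi y0 (e jj).val y = 1),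
        W jj * (σf jj x * chi y0 (e jj).val y) = 0 := by
      apply Finset.sum_eq_zero
      intro jj hjj
      have h1 : chi y0 (e jj).val y = 0 := by
        rcases chi_zero_or_one y0 (e jj).val y with h | h
        · exact h
        · exact absurd h (Finset.mem_filter.mp hjj).2
      rw [h1, mul_zero, mul_zero]
    rw [hz, add_zero]
    apply Finset.sum_congr rfl
    intro jj hjj
    rw [(Finset.mem_filter.mp hjj).2, mul_one]
  -- facts about the maximal configuration
  have hJM : ∀ x, J x ∈ Finset.univ.filter
      (fun jj => chi y0 (e jj).val (e (J x)).val = 1) := by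
    intro x
    simp only [Finset.mem_filter, Finset.mem_univ, true_and]
    exact chi_self y0 (e (J x)).val
  have hMag : ∀ x jj, jj ∈ Finset.univ.filter
      (fun jj => chi y0 (e jj).val (e (J x)).val = 1) →
      ∀ i ∈ psupp y0 (e jj).val, (e (J x)).val i = (e jj).val i := by
    intro x jj hjj
    exact chi_eq_one_iff.mp (Finset.mem_filter.mp hjj).2
  have hMsub : ∀ x jj, jj ∈ Finset.univ.filter
      (fun jj => chi y0 (e jj).val (e (J x)).val = 1) →
      psupp y0 (e jj).val ⊆ psupp y0 (e (J x)).val := by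
    intro x jj hjj i hi
    have h1 := hMag x jj hjj i hi
    exact mem_psupp.mpr (h1 ▸ mem_psupp.mp hi)
  have hMJ : ∀ x jj, jj ∈ Finset.univ.filter
      (fun jj => chi y0 (e jj).val (e (J x)).val = 1) →
      psupp y0 (e jj).val = psupp y0 (e (J x)).val → jj = J x := by
    intro x jj hjj hsupp
    have h1 : (e jj).val = (e (J x)).val :=
      pattern_ext hsupp (fun i hi => (hMag x jj hjj i hi).symm)
    exact e.injective (Subtype.ext h1)
  -- positivity of the best value
  have hpos : ∀ x, 0 < val x (e (J x)).val := by
    intro x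
    set Mu := Finset.univ.filter
      (fun jj => chi y0 (e jj).val (e (J x)).val = 1) with hMu
    rw [hMval x (e (J x)).val, ← Finset.sum_erase_add Mu _ (hJM x)]
    have hJterm : W (J x) * (1/2 : ℝ) ≤ W (J x) * σf (J x) x :=
      mul_le_mul_of_nonneg_left (hσ1 x) (hWpos (J x)).le
    by_cases hE : (Mu.erase (J x)).Nonempty
    · have hsu1 : 1 ≤ (psupp y0 (e (J x)).val).card := by
        obtain ⟨jj, hjj⟩ := hE
        have hjj' : jj ∈ Mu := Finset.mem_of_mem_erase hjj
        have hne : jj ≠ J x := Finset.ne_of_mem_erase hjj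
        have hss : psupp y0 (e jj).val ⊂ psupp y0 (e (J x)).val :=
          Finset.ssubset_iff_subset_ne.mpr
            ⟨hMsub x jj hjj', fun h => hne (hMJ x jj hjj' h)⟩
        have := Finset.card_lt_card hss
        omega
      obtain ⟨t, ht⟩ : ∃ t, (psupp y0 (e (J x)).val).card = t + 1 :=
        ⟨(psupp y0 (e (J x)).val).card - 1, by omega⟩
      have hcardE : ((Mu.erase (J x)).card : ℝ) ≤ (2:ℝ)^m := by
        have hinj : (Mu.erase (J x)).card ≤ (psupp y0 (e (J x)).val).powerset.card := by
          apply Finset.card_le_card_of_injOn (fun jj => psupp y0 (e jj).val)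
          · intro jj hjj
            exact Finset.mem_powerset.mpr
              (hMsub x jj (Finset.mem_of_mem_erase hjj))
          · intro jj hjj jj' hjj' hsupp
            have hjm : jj ∈ Mu := Finset.mem_of_mem_erase (Finset.mem_coe.mp hjj)
            have hjm' : jj' ∈ Mu := Finset.mem_of_mem_erase (Finset.mem_coe.mp hjj')
            have hsupp' : psupp y0 (e jj).val = psupp y0 (e jj').val := hsupp
            have h1 : (e jj).val = (e jj').val := by
              apply pattern_ext hsupp'
              intro i hi
              have hi' : i ∈ psupp y0 (e jj').val := by rw [← hsupp']; exact hi
              rw [← hMag x jj hjm i hi]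
              exact hMag x jj' hjm' i hi'
            exact e.injective (Subtype.ext h1)
        have hp : (psupp y0 (e (J x)).val).powerset.card
            = 2 ^ (psupp y0 (e (J x)).val).card := Finset.card_powerset _
        have hle : (2:ℕ) ^ (psupp y0 (e (J x)).val).card ≤ 2 ^ m := by
          apply Nat.pow_le_pow_right (by norm_num)
          simpa using Finset.card_le_card (Finset.subset_univ (psupp y0 (e (J x)).val))
        have : (Mu.erase (J x)).card ≤ 2 ^ m := by omega
        calc ((Mu.erase (J x)).card : ℝ) ≤ ((2^m : ℕ) : ℝ) := by exact_mod_cast this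
          _ = (2:ℝ)^m := by push_cast; ring
      set P : ℝ := Cr ^ t with hPdef
      have hPpos : (0:ℝ) < P := pow_pos (by linarith) t
      have hWJ : W (J x) = P * Cr := by
        show Cr ^ ((psupp y0 (e (J x)).val).card) = P * Cr
        rw [ht, hPdef, pow_succ]
      -- lower bound each small term
      have hterm : ∀ jj ∈ Mu.erase (J x),
          -(((n:ℝ)+1) * P) ≤ W jj * σf jj x := by
        intro jj hjj
        have hjm : jj ∈ Mu := Finset.mem_of_mem_erase hjj
        have hne : jj ≠ J x := Finset.ne_of_mem_erase hjj
        have hss : psupp y0 (e jj).val ⊂ psupp y0 (e (J x)).val :=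
          Finset.ssubset_iff_subset_ne.mpr
            ⟨hMsub x jj hjm, fun h => hne (hMJ x jj hjm h)⟩
        have hcard : (psupp y0 (e jj).val).card ≤ t := by
          have := Finset.card_lt_card hss
          omega
        have hWle : W jj ≤ P := by
          show Cr ^ ((psupp y0 (e jj).val).card) ≤ Cr ^ t
          exact pow_le_pow_right₀ hCr1 hcard
        have h1 : W jj * (-(((n:ℝ)+1))) ≤ W jj * σf jj x :=
          mul_le_mul_of_nonneg_left (hσ3 x jj) (hWpos jj).le
        have h2 : -(((n:ℝ)+1) * P) ≤ W jj * (-(((n:ℝ)+1))) := by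
          have h3 : W jj * ((n:ℝ)+1) ≤ P * ((n:ℝ)+1) := by
            apply mul_le_mul_of_nonneg_right hWle
            positivity
          linarith
        linarith
      have hsum : (Mu.erase (J x)).card • (-(((n:ℝ)+1) * P))
          ≤ ∑ jj ∈ Mu.erase (J x), W jj * σf jj x :=
        Finset.card_nsmul_le_sum _ _ _ hterm
      have hsum2 : -((2:ℝ)^m * (((n:ℝ)+1) * P))
          ≤ ∑ jj ∈ Mu.erase (J x), W jj * σf jj x := by
        have h4 : ((Mu.erase (J x)).card : ℝ) * (-(((n:ℝ)+1) * P))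
            ≥ (2:ℝ)^m * (-(((n:ℝ)+1) * P)) := by
          apply mul_le_mul_of_nonpos_right hcardE
          have : (0:ℝ) ≤ ((n:ℝ)+1) * P := by positivity
          linarith
        have h5 : (Mu.erase (J x)).card • (-(((n:ℝ)+1) * P))
            = ((Mu.erase (J x)).card : ℝ) * (-(((n:ℝ)+1) * P)) := by
          rw [nsmul_eq_mul]
        rw [h5] at hsum
        linarith
      have hWJσ : (1/2 : ℝ) * (P * Cr) ≤ W (J x) * σf (J x) x := by
        rw [hWJ] at hJterm ⊢
        linarith
      have hkey : (1/2 : ℝ) * (P * Cr) - (2:ℝ)^m * (((n:ℝ)+1) * P) = P / 2 := by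
        rw [hCr]; ring
      have hhalf : (0:ℝ) < P / 2 := half_pos hPpos
      set S1 : ℝ := ∑ jj ∈ Mu.erase (J x), W jj * σf jj x with hS1
      set S2 : ℝ := W (J x) * σf (J x) x with hS2
      clear_value S1 S2 P Cr
      linarith [hsum2, hWJσ, hkey, hhalf]
    · rw [Finset.not_nonempty_iff_eq_empty] at hE
      rw [hE, Finset.sum_empty, zero_add]
      have hσpos : (0:ℝ) < σf (J x) x := lt_of_lt_of_le (by norm_num) (hσ1 x)
      exact mul_pos (hWpos (J x)) hσpos
  -- values on the target set are all equal to the best value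
  have hTval : ∀ x y, y ∈ Tset x → val x y = val x (e (J x)).val := by
    intro x y hy
    rw [hval, hval]
    apply Finset.sum_congr rfl
    intro jj _
    rw [hchiT x (e jj) y ((hTmem x y).mp hy)]
  -- values off the target set are strictly smaller
  have hTlt : ∀ x y, y ∉ Tset x → val x y < val x (e (J x)).val := by
    intro x y hy
    rw [hTmem] at hy
    push_neg at hy
    obtain ⟨i0, hi0Λ, hi0ne⟩ := hy
    by_cases hA : ∀ i ∈ psupp y0 (e (J x)).val, y i = (e (J x)).val i
    · -- case B : y agrees on the support of the winning pattern
      have hi0ns : i0 ∉ psupp y0 (e (J x)).val := fun h => hi0ne (hA i0 h)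
      have hus0 : (e (J x)).val i0 = y0 i0 := by
        by_contra hc
        exact hi0ns (mem_psupp.mpr hc)
      have hyne : y i0 ≠ y0 i0 := by
        rw [← hus0]; exact hi0ne
      set v' : ∀ j, Fin (r j) := Function.update y0 i0 (y i0) with hv'
      have hv'supp : psupp y0 v' = {i0} := by
        rw [hv', psupp_update hyne (by rw [psupp_self]; exact Finset.notMem_empty i0),
          psupp_self]
        rfl
      have hv'Λ : psupp y0 v' ∈ Λ' := by rw [hv'supp]; exact hi0Λ
      set jj' : Fin B.rank := e.symm ⟨v', hv'Λ⟩ with hjj'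
      have hejj' : (e jj').val = v' := by
        rw [hjj', Equiv.apply_symm_apply]
      -- Mset us ⊆ Mset y
      have hsub : Finset.univ.filter
          (fun jj => chi y0 (e jj).val (e (J x)).val = 1) ⊆
          Finset.univ.filter (fun jj => chi y0 (e jj).val y = 1) := by
        intro jj hjj
        simp only [Finset.mem_filter, Finset.mem_univ, true_and] at hjj ⊢
        rw [chi_eq_one_iff] at hjj ⊢
        intro i hi
        have h1 : i ∈ psupp y0 (e (J x)).val := by
          apply mem_psupp.mpr
          rw [hjj i hi]
          exact mem_psupp.mp hi
        rw [hA i h1]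
        exact hjj i hi
      have hjj'My : jj' ∈ Finset.univ.filter (fun jj => chi y0 (e jj).val y = 1) := by
        simp only [Finset.mem_filter, Finset.mem_univ, true_and]
        rw [chi_eq_one_iff, hejj', hv'supp]
        intro i hi
        rw [Finset.mem_singleton] at hi
        subst hi
        rw [hv', Function.update_self]
      have hjj'Mu : jj' ∉ Finset.univ.filter
          (fun jj => chi y0 (e jj).val (e (J x)).val = 1) := by
        simp only [Finset.mem_filter, Finset.mem_univ, true_and]
        rw [chi_eq_one_iff, hejj', hv'supp]
        push_neg
        refine ⟨i0, Finset.mem_singleton_self i0, ?_⟩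
        rw [hv', Function.update_self, hus0]
        exact fun h => hyne (h ▸ rfl)
      rw [hMval x y, hMval x (e (J x)).val, ← Finset.sum_sdiff hsub]
      have hneg : ∑ jj ∈ (Finset.univ.filter (fun jj => chi y0 (e jj).val y = 1)) \
          (Finset.univ.filter (fun jj => chi y0 (e jj).val (e (J x)).val = 1)),
          W jj * σf jj x < 0 := by
        apply Finset.sum_neg
        · intro jj hjj
          have hne : jj ≠ J x := by
            intro h
            subst h
            exact (Finset.mem_sdiff.mp hjj).2 (hJM x)
          exact mul_neg_of_pos_of_neg (hWpos jj) (lt_of_le_of_lt (hσ2 x jj hne) (by norm_num))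
        · exact ⟨jj', Finset.mem_sdiff.mpr ⟨hjj'My, hjj'Mu⟩⟩
      linarith
    · -- case A : y disagrees on the support of the winning pattern
      push_neg at hA
      obtain ⟨i1, hi1, hi1ne⟩ := hA
      have hJnot : J x ∉ Finset.univ.filter (fun jj => chi y0 (e jj).val y = 1) := by
        simp only [Finset.mem_filter, Finset.mem_univ, true_and]
        rw [chi_eq_one_iff]
        push_neg
        exact ⟨i1, hi1, hi1ne⟩
      have hylez : val x y ≤ 0 := by
        rw [hMval x y]
        apply Finset.sum_nonpos
        intro jj hjj
        have hne : jj ≠ J x := by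
          intro h
          subst h
          exact hJnot hjj
        have h1 := hσ2 x jj hne
        have h2 : W jj * σf jj x ≤ W jj * (-(1/2 : ℝ)) :=
          mul_le_mul_of_nonneg_left h1 (hWpos jj).le
        have h3 := hWpos jj
        set wv : ℝ := W jj with hwv
        set sv : ℝ := σf jj x with hsv
        clear_value wv sv
        linarith
      exact lt_of_le_of_lt hylez (hpos x)
  -- now the inference set is exactly the target set
  have hinf : ∀ x, infSet A B θ x = Tset x := by
    intro x
    ext y
    simp only [infSet, Finset.mem_filter, Finset.mem_univ, true_and]
    have hiff : (∀ y', val x y' ≤ val x y) ↔ y ∈ Tset x := by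
      constructor
      · intro h
        by_contra hT
        have h1 := hTlt x y hT
        have h2 := h (e (J x)).val
        linarith
      · intro hy y'
        rw [hTval x y hy]
        by_cases hT' : y' ∈ Tset x
        · rw [hTval x y' hT']
        · exact (hTlt x y' hT').le
    constructor
    · intro h
      have := hiff.mp h
      rw [hTmem] at this ⊢
      exact this
    · intro h
      apply hiff.mpr
      rw [hTmem] at h ⊢
      exact h
  -- the pairing identity
  have hpair : ∀ (x : ∀ i, Fin (q i)) (u' : {v : (∀ j, Fin (r j)) // psupp y0 v ∈ Λ'}),
      ∑ q', hco u' q' * (((Tset x).card : ℝ)⁻¹ * ∑ y ∈ Tset x, B q' y)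
        = chi y0 u'.val (e (J x)).val := by
    intro x u'
    have hchiconst : ∀ y ∈ Tset x, chi y0 u'.val y = chi y0 u'.val (e (J x)).val := by
      intro y hy
      exact hchiT x u' y ((hTmem x y).mp hy)
    have hcardne : ((Tset x).card : ℝ) ≠ 0 := by
      have h1 : (e (J x)).val ∈ Tset x := husT x
      have hpos' : 0 < (Tset x).card := Finset.card_pos.mpr ⟨_, h1⟩
      exact_mod_cast hpos'.ne'
    calc ∑ q', hco u' q' * (((Tset x).card : ℝ)⁻¹ * ∑ y ∈ Tset x, B q' y)
        = ∑ q', ∑ y ∈ Tset x, ((Tset x).card : ℝ)⁻¹ * (hco u' q' * B q' y) := by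
          apply Finset.sum_congr rfl
          intro q' _
          rw [Finset.mul_sum, Finset.mul_sum]
          apply Finset.sum_congr rfl
          intro y _
          ring
      _ = ∑ y ∈ Tset x, ∑ q', ((Tset x).card : ℝ)⁻¹ * (hco u' q' * B q' y) :=
          Finset.sum_comm
      _ = ((Tset x).card : ℝ)⁻¹ * ∑ y ∈ Tset x, ∑ q', hco u' q' * B q' y := by
          rw [Finset.mul_sum]
          apply Finset.sum_congr rfl
          intro y _
          rw [Finset.mul_sum]
      _ = ((Tset x).card : ℝ)⁻¹ * ∑ y ∈ Tset x, chi y0 u'.val y := by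
          congr 1
          apply Finset.sum_congr rfl
          intro y _
          have := congrFun (hhspec u') y
          simpa [Finset.sum_apply] using this
      _ = ((Tset x).card : ℝ)⁻¹ * (((Tset x).card : ℝ) * chi y0 u'.val (e (J x)).val) := by
          congr 1
          rw [Finset.sum_congr rfl hchiconst, Finset.sum_const, nsmul_eq_mul]
      _ = chi y0 u'.val (e (J x)).val := by
          rw [← mul_assoc, inv_mul_cancel₀ hcardne, one_mul]
  -- the key factorization of tests against columns
  have hcolfact : ∀ (x' x : ∀ i, Fin (q i)),
      (∑ pq : Fin a × Fin bn, gdual x' pq.1 * hco (e (J x')) pq.2 * tropMat A B θ pq x)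
        = fdual x' x * chi y0 (e (J x')).val (e (J x)).val := by
    intro x' x
    have h0 : ∀ pq : Fin a × Fin bn, tropMat A B θ pq x
        = A pq.1 x * (((Tset x).card : ℝ)⁻¹ * ∑ y ∈ Tset x, B pq.2 y) := by
      intro pq
      show A pq.1 x * (((infSet A B θ x).card : ℝ)⁻¹ * ∑ y ∈ infSet A B θ x, B pq.2 y) = _
      rw [hinf x]
    calc (∑ pq : Fin a × Fin bn, gdual x' pq.1 * hco (e (J x')) pq.2 * tropMat A B θ pq x)
        = ∑ pq : Fin a × Fin bn, (gdual x' pq.1 * A pq.1 x) *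
            (hco (e (J x')) pq.2 * (((Tset x).card : ℝ)⁻¹ * ∑ y ∈ Tset x, B pq.2 y)) := by
          apply Finset.sum_congr rfl
          intro pq _
          rw [h0 pq]
          ring
      _ = (∑ p, gdual x' p * A p x) * (∑ q', hco (e (J x')) q' *
            (((Tset x).card : ℝ)⁻¹ * ∑ y ∈ Tset x, B q' y)) := by
          rw [Finset.sum_mul_sum]
          exact Fintype.sum_prod_type _
      _ = fdual x' x * chi y0 (e (J x')).val (e (J x)).val := by
          congr 1
          · have := congrFun (hdspec x') x
            simpa [Finset.sum_apply] using this
          · exact hpair x (e (J x'))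
  -- linear independence of the columns
  have hLI : LinearIndependent ℝ (tropMat A B θ).transpose := by
    apply Fintype.linearIndependent_iff.mpr
    intro g hg
    have hpt : ∀ pq : Fin a × Fin bn, ∑ x, g x * tropMat A B θ pq x = 0 := by
      intro pq
      have := congrFun hg pq
      simpa [Finset.sum_apply, Matrix.transpose_apply] using this
    have htest : ∀ x', ∑ x, g x * (fdual x' x * chi y0 (e (J x')).val (e (J x)).val) = 0 := by
      intro x'
      have h0 : ∑ pq : Fin a × Fin bn, gdual x' pq.1 * hco (e (J x')) pq.2 *
          (∑ x, g x * tropMat A B θ pq x) = 0 := by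
        apply Finset.sum_eq_zero
        intro pq _
        rw [hpt pq, mul_zero]
      have h1 : ∑ pq : Fin a × Fin bn, gdual x' pq.1 * hco (e (J x')) pq.2 *
          (∑ x, g x * tropMat A B θ pq x)
          = ∑ x, g x * (∑ pq : Fin a × Fin bn,
              gdual x' pq.1 * hco (e (J x')) pq.2 * tropMat A B θ pq x) := by
        calc ∑ pq : Fin a × Fin bn, gdual x' pq.1 * hco (e (J x')) pq.2 *
            (∑ x, g x * tropMat A B θ pq x)
            = ∑ pq : Fin a × Fin bn, ∑ x, gdual x' pq.1 * hco (e (J x')) pq.2 *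
              (g x * tropMat A B θ pq x) := by
              apply Finset.sum_congr rfl
              intro pq _
              rw [Finset.mul_sum]
          _ = ∑ x, ∑ pq : Fin a × Fin bn, gdual x' pq.1 * hco (e (J x')) pq.2 *
              (g x * tropMat A B θ pq x) := Finset.sum_comm
          _ = ∑ x, g x * (∑ pq : Fin a × Fin bn,
              gdual x' pq.1 * hco (e (J x')) pq.2 * tropMat A B θ pq x) := by
              apply Finset.sum_congr rfl
              intro x _
              rw [Finset.mul_sum]
              apply Finset.sum_congr rfl
              intro pq _
              ring
      rw [h1] at h0
      calc ∑ x, g x * (fdual x' x * chi y0 (e (J x')).val (e (J x)).val)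
          = ∑ x, g x * (∑ pq : Fin a × Fin bn,
              gdual x' pq.1 * hco (e (J x')) pq.2 * tropMat A B θ pq x) := by
            apply Finset.sum_congr rfl
            intro x _
            rw [hcolfact x' x]
        _ = 0 := h0
    intro x
    by_contra hgx
    have hSne : (Finset.univ.filter (fun z => g z ≠ 0)).Nonempty := ⟨x, by simp [hgx]⟩
    obtain ⟨x0, hx0S, hmax⟩ := Finset.exists_max_image
      (Finset.univ.filter (fun z => g z ≠ 0))
      (fun z => (psupp y0 (e (J z)).val).card * (n+1) + hammingDist z (c (J z))) hSne
    have hgx0 : g x0 ≠ 0 := (Finset.mem_filter.mp hx0S).2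
    have hdiag : fdual x0 x0 * chi y0 (e (J x0)).val (e (J x0)).val = 1 := by
      rw [chi_self, mul_one]
      show (∏ i ∈ Sx x0, if x0 i = x0 i then (1:ℝ) else 0) = 1
      apply Finset.prod_eq_one
      intro i _
      rw [if_pos rfl]
    have hoff : ∀ z, z ≠ x0 → g z * (fdual x0 z * chi y0 (e (J x0)).val (e (J z)).val) = 0 := by
      intro z hne
      by_cases hgz : g z = 0
      · rw [hgz, zero_mul]
      · have hω := hmax z (Finset.mem_filter.mpr ⟨Finset.mem_univ _, hgz⟩)
        by_contra hprod
        have hfd : fdual x0 z ≠ 0 := by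
          intro h
          exact hprod (by rw [h, zero_mul, mul_zero])
        have hch : chi y0 (e (J x0)).val (e (J z)).val ≠ 0 := by
          intro h
          exact hprod (by rw [h, mul_zero, mul_zero])
        have hagree : ∀ i ∈ psupp y0 (e (J x0)).val,
            (e (J z)).val i = (e (J x0)).val i :=
          not_not.mp (fun hc => hch (chi_eq_zero_iff.mpr hc))
        have hsub : psupp y0 (e (J x0)).val ⊆ psupp y0 (e (J z)).val := by
          intro i hi
          apply mem_psupp.mpr
          rw [hagree i hi]
          exact mem_psupp.mp hi
        have hc0z : (psupp y0 (e (J x0)).val).card ≤ (psupp y0 (e (J z)).val).card :=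
          Finset.card_le_card hsub
        have hd0 : hammingDist x0 (c (J x0)) ≤ k := hJ x0
        have hdz : hammingDist z (c (J z)) ≤ k := hJ z
        have hceq : (psupp y0 (e (J z)).val).card = (psupp y0 (e (J x0)).val).card := by
          by_contra hnecard
          have hlt : (psupp y0 (e (J x0)).val).card + 1 ≤ (psupp y0 (e (J z)).val).card := by
            omega
          have h2 : ((psupp y0 (e (J x0)).val).card + 1) * (n+1)
              ≤ (psupp y0 (e (J z)).val).card * (n+1) :=
            Nat.mul_le_mul_right _ hlt
          have h3 : ((psupp y0 (e (J x0)).val).card + 1) * (n+1)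
              = (psupp y0 (e (J x0)).val).card * (n+1) + (n+1) := by ring
          linarith [hω, hd0, hdz, hkn]
        have hsuppEq : psupp y0 (e (J x0)).val = psupp y0 (e (J z)).val :=
          Finset.eq_of_subset_of_card_le hsub (le_of_eq hceq)
        have hpatEq : (e (J x0)).val = (e (J z)).val :=
          pattern_ext hsuppEq (fun i hi => (hagree i hi).symm)
        have hJeq : J z = J x0 := e.injective (Subtype.ext hpatEq.symm)
        -- now use the dual function on the X side
        have hfag : ∀ i ∈ Sx x0, z i = x0 i := by
          apply prod_ind_ne_zero (s := Sx x0) (P := fun i => z i = x0 i)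
          exact hfd
        have hSsub : Sx x0 ⊆ Sx z := by
          intro i hi
          have h1 : x0 i ≠ c (J x0) i := by
            have := Finset.mem_filter.mp hi
            exact this.2
          apply Finset.mem_filter.mpr
          refine ⟨Finset.mem_univ _, ?_⟩
          rw [hJeq, hfag i hi]
          exact h1
        have hdle : hammingDist x0 (c (J x0)) ≤ hammingDist z (c (J z)) := by
          rw [← hSxcard x0, ← hSxcard z]
          exact Finset.card_le_card hSsub
        have hdled0 : hammingDist z (c (J z)) ≤ hammingDist x0 (c (J x0)) := by
          rw [hceq] at hω
          exact le_of_add_le_add_left hω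
        have hdeq : (Sx z).card = (Sx x0).card := by
          rw [hSxcard x0, hSxcard z]
          omega
        have hSeq : Sx x0 = Sx z := Finset.eq_of_subset_of_card_le hSsub (le_of_eq hdeq)
        have hzx0 : z = x0 := by
          funext i
          by_cases hi : i ∈ Sx x0
          · exact hfag i hi
          · have hiz : i ∉ Sx z := by rw [← hSeq]; exact hi
            have h1 : z i = c (J z) i := by
              by_contra hc
              exact hiz (Finset.mem_filter.mpr ⟨Finset.mem_univ _, hc⟩)
            have h2 : x0 i = c (J x0) i := by
              by_contra hc
              exact hi (Finset.mem_filter.mpr ⟨Finset.mem_univ _, hc⟩)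
            rw [h1, h2, hJeq]
        exact hne hzx0
    have hsum0 := htest x0
    rw [Finset.sum_eq_single x0 (fun b _ hb => hoff b hb)
      (fun h => absurd (Finset.mem_univ x0) h)] at hsum0
    rw [hdiag, mul_one] at hsum0
    exact hgx0 hsum0
  constructor
  · refine ⟨θ, ?_⟩
    rw [Matrix.rank_eq_finrank_span_cols]
    exact (finrank_span_eq_card hLI).symm
  · rintro s ⟨θ', rfl⟩
    exact Matrix.rank_le_card_width _
end

section
/- Let X be a finite nonempty set, let A ∈ ℝ^{a×X} be a matrix whose first row is the all-ones vector, let m ≥ 1, and let σ(t) = e^t/(1+e^t). For W ∈ ℝ^{m×a} let M(W) ∈ ℝ^{a(m+1)×X} be the matrix whose column indexed by x is A_x ⊗ (1, σ((W A_x)₁), …, σ((W A_x)_m)) ∈ ℝ^{a(m+1)}, and for W̃ ∈ ℝ^{(m+1)×a} let M̃(W̃) ∈ ℝ^{a(m+1)×X} be the matrix whose column indexed by x is A_x ⊗ s(W̃ A_x), where s : ℝ^{m+1} → ℝ^{m+1} is the softmax map s(v)_j = e^{v_j}/∑_{i=0}^{m} e^{v_i}. Then max_{W∈ℝ^{m×a}}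 rank M(W) ≥ max_{W̃∈ℝ^{(m+1)×a}} rank M̃(W̃). -/
open scoped Classical BigOperators

/-- The matrix `M(W)` with columns `A_x ⊗ (1, σ((WA_x)₁), …, σ((WA_x)_m))`, where
`σ(t) = e^t/(1+e^t)`: the rank-relevant Jacobian matrix of the Kronecker product model
with `m` independent binary hidden variables. -/
noncomputable def Mrbm {X : Type*} [Fintype X] {a m : ℕ} (A : Matrix (Fin a) X ℝ)
    (W : Matrix (Fin m) (Fin a) ℝ) : Matrix (Fin a × Fin (m + 1)) X ℝ :=
  fun p x => A p.1 x *
    (Fin.cases 1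
      (fun l : Fin m =>
        Real.exp (W.mulVec (fun i => A i x) l) /
          (1 + Real.exp (W.mulVec (fun i => A i x) l)))
      p.2)

/-- The matrix `M̃(W̃)` with columns `A_x ⊗ softmax(W̃ A_x)`: the rank-relevant Jacobian
matrix of the `(m+1)`-mixture of the exponential family `E_A`. -/
noncomputable def Mmix {X : Type*} [Fintype X] {a m : ℕ} (A : Matrix (Fin a) X ℝ)
    (Wt : Matrix (Fin (m + 1)) (Fin a) ℝ) : Matrix (Fin a × Fin (m + 1)) X ℝ :=
  fun p x => A p.1 x *
    (Real.exp (Wt.mulVec (fun i => A i x) p.2) /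
      ∑ l : Fin (m + 1), Real.exp (Wt.mulVec (fun i => A i x) l))

/-- If the first row of `A` is the all-ones vector, then
`max_W rank M(W) ≥ max_{W̃} rank M̃(W̃)`: the Kronecker product model with `m`
independent binary hidden variables has dimension at least that of the `(m+1)`-mixture
of `E_A`. -/
theorem rbm_rank_ge_mixture_rank
    {X : Type*} [Fintype X] [Nonempty X] {a m : ℕ} (hm : 1 ≤ m) (ha : 0 < a)
    (A : Matrix (Fin a) X ℝ) (hA : ∀ x, A ⟨0, ha⟩ x = 1) :
    ∀ Wt : Matrix (Fin (m + 1)) (Fin a) ℝ, ∃ W : Matrix (Fin m) (Fin a) ℝ,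
      (Mmix A Wt).rank ≤ (Mrbm A W).rank := by
  intro Wt
  classical
  -- notation
  set v : X → Fin (m + 1) → ℝ := fun x j => Wt.mulVec (fun i => A i x) j with hv
  set Z : X → ℝ := fun x => ∑ l : Fin (m + 1), Real.exp (v x l) with hZ
  have hZpos : ∀ x, 0 < Z x := fun x =>
    Finset.sum_pos (fun l _ => Real.exp_pos _) ⟨0, Finset.mem_univ _⟩
  set s0 : X → ℝ := fun x => Real.exp (v x 0) / Z x with hs0
  have hs0pos : ∀ x, 0 < s0 x := fun x => div_pos (Real.exp_pos _) (hZpos x)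
  -- the sequence of weight matrices
  set W : ℕ → Matrix (Fin m) (Fin a) ℝ :=
    fun n l i => Wt l.succ i - Wt 0 i - (if i = (⟨0, ha⟩ : Fin a) then (n : ℝ) else 0)
    with hW
  have hkey : ∀ (n : ℕ) (x : X) (l : Fin m),
      (W n).mulVec (fun i => A i x) l = v x l.succ - v x 0 - n := by
    intro n x l
    have h0 : ∀ j : Fin (m + 1), v x j = ∑ i, Wt j i * A i x := fun j => rfl
    have h1 : (W n).mulVec (fun i => A i x) l = ∑ i, (W n) l i * A i x := rfl
    rw [h1, h0, h0]
    calc ∑ i, (W n) l i * A i x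
        = ∑ i, ((Wt l.succ i * A i x - Wt 0 i * A i x)
            - (if i = (⟨0, ha⟩ : Fin a) then (n : ℝ) * A i x else 0)) := by
          refine Finset.sum_congr rfl fun i _ => ?_
          simp only [hW]
          split <;> ring
      _ = (∑ i, (Wt l.succ i * A i x - Wt 0 i * A i x))
            - ∑ i, (if i = (⟨0, ha⟩ : Fin a) then (n : ℝ) * A i x else 0) :=
          Finset.sum_sub_distrib _ _
      _ = (∑ i, Wt l.succ i * A i x) - (∑ i, Wt 0 i * A i x) - (n : ℝ) := by
          rw [Finset.sum_sub_distrib,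
            Finset.sum_ite_eq' Finset.univ (⟨0, ha⟩ : Fin a) (fun i => (n : ℝ) * A i x)]
          simp [hA]
  -- transformed columns of `Mrbm A (W n)`
  set g : ℕ → X → (Fin a × Fin (m + 1)) → ℝ :=
    fun n x p => s0 x * ((Fin.cases 1 (fun _ => Real.exp n) p.2 : ℝ) * Mrbm A (W n) p x)
    with hg
  -- columns of `Mmix A Wt`
  have hcol : ∀ x p, (Mmix A Wt).transpose x p = A p.1 x * (Real.exp (v x p.2) / Z x) := by
    intro x p; rfl
  -- convergence of transformed columns
  have htend : ∀ x, Filter.Tendsto (fun n : ℕ => g n x) Filter.atTop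
      (nhds ((Mmix A Wt).transpose x)) := by
    intro x
    rw [tendsto_pi_nhds]
    rintro ⟨i, j⟩
    induction j using Fin.cases with
    | zero =>
        have : ∀ n : ℕ, g n x (i, 0) = (Mmix A Wt).transpose x (i, 0) := by
          intro n
          simp only [hg, Mrbm, Fin.cases_zero, hcol]
          ring
        simp only [this]
        exact tendsto_const_nhds
    | succ l =>
        have hform : ∀ n : ℕ, g n x (i, l.succ)
            = (A i x * (Real.exp (v x l.succ) / Z x))
              * (1 + Real.exp (v x l.succ - v x 0 - n))⁻¹ := by
          intro n
          have h1 : (0:ℝ) < 1 + Real.exp (v x l.succ - v x 0 - n) := by positivity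
          have e1 : Real.exp (n : ℝ) * Real.exp (v x l.succ - v x 0 - n)
              * Real.exp (v x 0) = Real.exp (v x l.succ) := by
            rw [← Real.exp_add, ← Real.exp_add]; congr 1; ring
          simp only [hg, Mrbm, Fin.cases_succ, hkey, hs0]
          rw [← e1]
          ring
        simp only [hform, hcol]
        have hexp : Filter.Tendsto
            (fun n : ℕ => Real.exp (v x l.succ - v x 0 - n)) Filter.atTop (nhds 0) := by
          have : (fun n : ℕ => Real.exp (v x l.succ - v x 0 - n))
              = fun n : ℕ => Real.exp (v x l.succ - v x 0) * Real.exp (-(n : ℝ)) := by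
            funext n; rw [← Real.exp_add]; ring_nf
          rw [this]
          have := (Real.tendsto_exp_neg_atTop_nhds_zero.comp
            (tendsto_natCast_atTop_atTop (R := ℝ)))
          simpa using (this.const_mul (Real.exp (v x l.succ - v x 0)))
        have h1 : Filter.Tendsto
            (fun n : ℕ => (1 + Real.exp (v x l.succ - v x 0 - n))⁻¹) Filter.atTop
            (nhds 1) := by
          have := (tendsto_const_nhds (x := (1:ℝ)) (f := Filter.atTop (α := ℕ))).add hexp
          rw [add_zero] at this
          simpa using this.inv₀ (by norm_num)
        have := h1.const_mul (A i x * (Real.exp (v x l.succ) / Z x))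
        simpa using this
  -- a basis of the column span of `Mmix`
  obtain ⟨b, hbsub, hbspan, hbind⟩ :=
    exists_linearIndependent ℝ (Set.range (Mmix A Wt).transpose)
  haveI : Fintype b := hbind.setFinite.fintype
  have hrankmix : (Mmix A Wt).rank = Fintype.card b := by
    rw [Matrix.rank_eq_finrank_span_cols,
      show (Mmix A Wt).col = (Mmix A Wt).transpose from rfl, ← hbspan]
    have := finrank_span_eq_card hbind
    rwa [Subtype.range_coe] at this
  -- choose preimages of basis vectors among columns
  choose χ hχ using fun y : b => (hbsub y.2 : (y : (Fin a × Fin (m + 1)) → ℝ) ∈ Set.range (Mmix A Wt).transpose)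
  -- linear independence is open, so for some n transformed columns are independent
  have hopen : IsOpen {f : b → ((Fin a × Fin (m + 1)) → ℝ) | LinearIndependent ℝ f} :=
    isOpen_setOf_linearIndependent
  have hlim : Filter.Tendsto (fun n : ℕ => fun y : b => g n (χ y)) Filter.atTop
      (nhds (fun y : b => (y : (Fin a × Fin (m + 1)) → ℝ))) := by
    rw [tendsto_pi_nhds]
    intro y
    rw [← hχ y]
    exact htend (χ y)
  have hev : ∀ᶠ n in Filter.atTop,
      LinearIndependent ℝ (fun y : b => g n (χ y)) :=
    hlim.eventually (hopen.eventually_mem hbind)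
  obtain ⟨n, hn⟩ := hev.exists
  refine ⟨W n, ?_⟩
  -- undo the transformation: columns of `Mrbm A (W n)` at `χ` are independent
  set T : ((Fin a × Fin (m + 1)) → ℝ) →ₗ[ℝ] ((Fin a × Fin (m + 1)) → ℝ) :=
    { toFun := fun f p => (Fin.cases 1 (fun _ => Real.exp n) p.2 : ℝ) * f p
      map_add' := by intro f g'; funext p; simp [mul_add]
      map_smul' := by intro c f; funext p; simp; ring }
  have hcomp : (fun y : b => g n (χ y))
      = T ∘ (fun y : b => s0 (χ y) • (Mrbm A (W n)).transpose (χ y)) := by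
    funext y
    funext p
    simp only [hg, Function.comp, T, LinearMap.coe_mk, AddHom.coe_mk, Pi.smul_apply,
      smul_eq_mul, Matrix.transpose_apply]
    ring
  rw [hcomp] at hn
  have hind2 : LinearIndependent ℝ (fun y : b => s0 (χ y) • (Mrbm A (W n)).transpose (χ y)) :=
    hn.of_comp T
  have hind3 : LinearIndependent ℝ (fun y : b => (Mrbm A (W n)).transpose (χ y)) := by
    have heq : (fun y : b => (Mrbm A (W n)).transpose (χ y))
        = (fun y : b => (Units.mk0 (s0 (χ y)) (hs0pos (χ y)).ne')⁻¹)
          • (fun y : b => s0 (χ y) • (Mrbm A (W n)).transpose (χ y)) := by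
      funext y
      simp [Pi.smul_apply', Units.smul_def, smul_smul,
        inv_mul_cancel₀ (hs0pos (χ y)).ne']
    rw [heq]
    exact hind2.units_smul _
  -- conclude on ranks
  rw [hrankmix, Matrix.rank_eq_finrank_span_cols]
  calc Fintype.card b
      = Module.finrank ℝ (Submodule.span ℝ
          (Set.range (fun y : b => (Mrbm A (W n)).transpose (χ y)))) :=
        (finrank_span_eq_card hind3).symm
    _ ≤ Module.finrank ℝ (Submodule.span ℝ (Set.range (Mrbm A (W n)).transpose)) := by
        apply Submodule.finrank_mono
        apply Submodule.span_mono
        rintro _ ⟨y, rfl⟩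
        exact ⟨χ y, rfl⟩
end
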